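/- The assignment X_ℓ ↦ x_ℓ^{p^{r−ℓ−1}}, Y_ℓ ↦ y_ℓ^{p^{r−ℓ−1}} (0 ≤ ℓ < r) sends every generator of J_r to zero in Q_r, hence induces a k-algebra homomorphism θ̄_r : B_r/J_r → Q_r. Moreover θ̄_r is injective, and Q_r is a finitely generated module over the image of θ̄_r (i.e., θ̄_r is a finite map of integral domains). -/

import Mathlib

open MvPolynomial

/-- The ideal `J_r ⊆ B_r = k[X_0,…,X_{r-1},Y_0,…,Y_{r-1}]` generated by the elements
`X_ℓ·Y_{ℓ'} − X_{ℓ'}·Y_ℓ` for `0 ≤ ℓ < ℓ' < r`; `Sum.inl ℓ` is `X_ℓ` and `Sum.inr ℓ` is `Y_ℓ`. -/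
noncomputable def Jideal (k : Type*) [CommRing k] (r : ℕ) :
    Ideal (MvPolynomial (Fin r ⊕ Fin r) k) :=
  Ideal.span { f | ∃ ℓ ℓ' : Fin r, ℓ < ℓ' ∧
    f = X (Sum.inl ℓ) * X (Sum.inr ℓ') - X (Sum.inl ℓ') * X (Sum.inr ℓ) }

/-- The ideal of relations defining `Q_r`: it is generated by the elements
`x_ℓ^{p^{ℓ'−ℓ}}·y_{ℓ'} − y_ℓ^{p^{ℓ'−ℓ}}·x_{ℓ'}` for all `0 ≤ ℓ < ℓ' < r`, where `Sum.inl ℓ`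
is `x_ℓ` and `Sum.inr ℓ` is `y_ℓ`. -/
noncomputable def Qrel (k : Type*) [CommRing k] (p r : ℕ) :
    Ideal (MvPolynomial (Fin r ⊕ Fin r) k) :=
  Ideal.span { f | ∃ ℓ ℓ' : Fin r, ℓ < ℓ' ∧
    f = X (Sum.inl ℓ) ^ p ^ ((ℓ' : ℕ) - (ℓ : ℕ)) * X (Sum.inr ℓ') -
        X (Sum.inr ℓ) ^ p ^ ((ℓ' : ℕ) - (ℓ : ℕ)) * X (Sum.inl ℓ') }

/-- The `k`-algebra map `B_r → Q_r` sending `X_ℓ ↦ x_ℓ^{p^{r−ℓ−1}}` and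
`Y_ℓ ↦ y_ℓ^{p^{r−ℓ−1}}`. -/
noncomputable def thetaAux (k : Type*) [CommRing k] (p r : ℕ) :
    MvPolynomial (Fin r ⊕ Fin r) k →ₐ[k] (MvPolynomial (Fin r ⊕ Fin r) k ⧸ Qrel k p r) :=
  aeval fun i =>
    Ideal.Quotient.mk (Qrel k p r) (X i) ^ p ^ (r - Sum.elim Fin.val Fin.val i - 1)

/-! ### Auxiliary material

We factor `thetaAux` through the parametrization `x_ℓ ↦ s_ℓ`, `y_ℓ ↦ t^{p^ℓ} s_ℓ` of `Q_r`;
the composite `B_r → k[t,s]` is the monomial map `X_ℓ ↦ s_ℓ^{p^{r-ℓ-1}}`,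
`Y_ℓ ↦ t^{p^{r-1}} s_ℓ^{p^{r-ℓ-1}}`, whose kernel is shown to be contained in `J_r` by a
combinatorial normal-form argument. -/

section Aux

variable {k : Type*} [CommRing k]

/-- The exponent of the image of a monomial under the parametrizing monomial map. -/
noncomputable def Emap (p r : ℕ) (m : (Fin r ⊕ Fin r) →₀ ℕ) : Option (Fin r) →₀ ℕ :=
  Finsupp.single none (p ^ (r - 1) * ∑ ℓ, m (Sum.inr ℓ)) +
    ∑ ℓ : Fin r, Finsupp.single (some ℓ)
      (p ^ (r - (ℓ : ℕ) - 1) * (m (Sum.inl ℓ) + m (Sum.inr ℓ)))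

/-- The parametrizing monomials: `none` is `t` and `some ℓ` is `s_ℓ`. -/
noncomputable def gfun (k : Type*) [CommRing k] (p r : ℕ) :
    (Fin r ⊕ Fin r) → MvPolynomial (Option (Fin r)) k
  | .inl ℓ => X (some ℓ) ^ p ^ (r - (ℓ : ℕ) - 1)
  | .inr ℓ => X none ^ p ^ (r - 1) * X (some ℓ) ^ p ^ (r - (ℓ : ℕ) - 1)

/-- The parametrizing monomial map `B_r → k[t, s_0, …, s_{r-1}]`. -/
noncomputable def phiMap (k : Type*) [CommRing k] (p r : ℕ) :
    MvPolynomial (Fin r ⊕ Fin r) k →ₐ[k] MvPolynomial (Option (Fin r)) k :=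
  aeval (gfun k p r)

/-- The parametrization of `Q_r`: `x_ℓ ↦ s_ℓ`, `y_ℓ ↦ t^{p^ℓ} s_ℓ`. -/
noncomputable def vfun (k : Type*) [CommRing k] (p r : ℕ) :
    (Fin r ⊕ Fin r) → MvPolynomial (Option (Fin r)) k
  | .inl ℓ => X (some ℓ)
  | .inr ℓ => X none ^ p ^ (ℓ : ℕ) * X (some ℓ)

lemma Emap_add (p r : ℕ) (m m' : (Fin r ⊕ Fin r) →₀ ℕ) :
    Emap p r (m + m') = Emap p r m + Emap p r m' := by
  unfold Emap
  simp only [Finsupp.add_apply, Finset.sum_add_distrib, mul_add, Finsupp.single_add]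
  abel

lemma Emap_apply_none (p r : ℕ) (m : (Fin r ⊕ Fin r) →₀ ℕ) :
    Emap p r m none = p ^ (r - 1) * ∑ ℓ, m (Sum.inr ℓ) := by
  unfold Emap
  rw [Finsupp.add_apply, Finsupp.finset_sum_apply]
  simp [Finsupp.single_apply]

lemma Emap_apply_some (p r : ℕ) (m : (Fin r ⊕ Fin r) →₀ ℕ) (ℓ : Fin r) :
    Emap p r m (some ℓ) = p ^ (r - (ℓ : ℕ) - 1) * (m (Sum.inl ℓ) + m (Sum.inr ℓ)) := by
  unfold Emap
  rw [Finsupp.add_apply, Finsupp.finset_sum_apply]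
  simp [Finsupp.single_apply]

lemma Emap_single_inl (p r : ℕ) (ℓ : Fin r) (n : ℕ) :
    Emap p r (Finsupp.single (Sum.inl ℓ) n) =
      Finsupp.single (some ℓ) (p ^ (r - (ℓ : ℕ) - 1) * n) := by
  ext j
  match j with
  | none => simp [Emap_apply_none, Finsupp.single_apply]
  | some x =>
    rw [Emap_apply_some]
    simp [Finsupp.single_apply, Sum.inl.injEq]
    split_ifs with h1 h2 h2 <;> simp_all

lemma Emap_single_inr (p r : ℕ) (ℓ : Fin r) (n : ℕ) :
    Emap p r (Finsupp.single (Sum.inr ℓ) n) =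
      Finsupp.single none (p ^ (r - 1) * n) +
        Finsupp.single (some ℓ) (p ^ (r - (ℓ : ℕ) - 1) * n) := by
  ext j
  match j with
  | none => simp [Emap_apply_none, Finsupp.single_apply, Finset.sum_ite_eq]
  | some x =>
    rw [Finsupp.add_apply, Emap_apply_some]
    simp [Finsupp.single_apply]
    split_ifs with h1 h2 h2 <;> simp_all

lemma Emap_zero (p r : ℕ) : Emap p r 0 = 0 := by
  have := Emap_add p r 0 0
  simpa using this.symm

lemma phiMap_monomial (p r : ℕ) (m : (Fin r ⊕ Fin r) →₀ ℕ) (c : k) :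
    phiMap k p r (monomial m c) = monomial (Emap p r m) c := by
  induction m using Finsupp.induction with
  | zero =>
    rw [Emap_zero]
    simp only [monomial_zero']
    simp [phiMap]
  | single_add i n s hi hn ih =>
    have hsplit : monomial (Finsupp.single i n + s) c
        = monomial (Finsupp.single i n) (1 : k) * monomial s c := by
      rw [monomial_mul, one_mul]
    rw [hsplit, map_mul, ih, ← X_pow_eq_monomial, map_pow, Emap_add]
    match i with
    | Sum.inl ℓ =>
      rw [Emap_single_inl]
      have : phiMap k p r (X (Sum.inl ℓ)) = X (some ℓ) ^ p ^ (r - (ℓ : ℕ) - 1) := by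
        simp [phiMap, gfun]
      rw [this, ← pow_mul, X_pow_eq_monomial, monomial_mul, one_mul]
    | Sum.inr ℓ =>
      rw [Emap_single_inr]
      have : phiMap k p r (X (Sum.inr ℓ)) =
          X none ^ p ^ (r - 1) * X (some ℓ) ^ p ^ (r - (ℓ : ℕ) - 1) := by
        simp [phiMap, gfun]
      rw [this, mul_pow, ← pow_mul, ← pow_mul, X_pow_eq_monomial, X_pow_eq_monomial,
        monomial_mul, monomial_mul, one_mul, one_mul]

lemma pairmon {σ : Type*} (a b : σ) :
    (monomial (Finsupp.single a 1 + Finsupp.single b 1) (1 : k)) = X a * X b := by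
  rw [← pow_one (X a), ← pow_one (X b), X_pow_eq_monomial, X_pow_eq_monomial,
    monomial_mul, one_mul]

/-- The combinatorial heart: two monomials with the same image exponents are congruent
modulo `J_r`. -/
lemma monomial_sub_mem_J (p r : ℕ) (hp : 0 < p) :
    ∀ n : ℕ, ∀ m m' : (Fin r ⊕ Fin r) →₀ ℕ,
    (∑ ℓ, (m (Sum.inr ℓ) - m' (Sum.inr ℓ) + (m' (Sum.inr ℓ) - m (Sum.inr ℓ)))) = n →
    Emap p r m = Emap p r m' →
    monomial m (1 : k) - monomial m' 1 ∈ Jideal k r := by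
  intro n
  induction n using Nat.strong_induction_on with
  | _ n ih =>
  intro m m' hn hE
  have hppos : ∀ e : ℕ, 0 < p ^ e := fun e => Nat.pow_pos (n := e) hp
  have hsum : (∑ ℓ, m (Sum.inr ℓ)) = ∑ ℓ, m' (Sum.inr ℓ) := by
    have h := DFunLike.congr_fun hE none
    rw [Emap_apply_none, Emap_apply_none] at h
    exact Nat.eq_of_mul_eq_mul_left (hppos _) h
  have htot : ∀ ℓ : Fin r, m (Sum.inl ℓ) + m (Sum.inr ℓ)
      = m' (Sum.inl ℓ) + m' (Sum.inr ℓ) := by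
    intro ℓ
    have h := DFunLike.congr_fun hE (some ℓ)
    rw [Emap_apply_some, Emap_apply_some] at h
    exact Nat.eq_of_mul_eq_mul_left (hppos _) h
  by_cases h0 : ∀ ℓ : Fin r, m (Sum.inr ℓ) = m' (Sum.inr ℓ)
  · have hmm : m = m' := by
      ext j
      match j with
      | Sum.inl ℓ => have h1 := htot ℓ; have h2 := h0 ℓ; omega
      | Sum.inr ℓ => exact h0 ℓ
    rw [hmm, sub_self]
    exact zero_mem _
  · push_neg at h0
    obtain ⟨ℓ₀, hℓ₀⟩ := h0
    have hex1 : ∃ ℓ₁ : Fin r, m' (Sum.inr ℓ₁) < m (Sum.inr ℓ₁) := by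
      by_contra hc
      push_neg at hc
      have hlt : (∑ ℓ, m (Sum.inr ℓ)) < ∑ ℓ, m' (Sum.inr ℓ) :=
        Finset.sum_lt_sum (fun ℓ _ => hc ℓ)
          ⟨ℓ₀, Finset.mem_univ _, lt_of_le_of_ne (hc ℓ₀) hℓ₀⟩
      omega
    have hex2 : ∃ ℓ₂ : Fin r, m (Sum.inr ℓ₂) < m' (Sum.inr ℓ₂) := by
      by_contra hc
      push_neg at hc
      have hlt : (∑ ℓ, m' (Sum.inr ℓ)) < ∑ ℓ, m (Sum.inr ℓ) :=
        Finset.sum_lt_sum (fun ℓ _ => hc ℓ)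
          ⟨ℓ₀, Finset.mem_univ _, lt_of_le_of_ne (hc ℓ₀) (Ne.symm hℓ₀)⟩
      omega
    obtain ⟨ℓ₁, hℓ₁⟩ := hex1
    obtain ⟨ℓ₂, hℓ₂⟩ := hex2
    have hne12 : ℓ₁ ≠ ℓ₂ := by
      intro he
      rw [he] at hℓ₁
      omega
    have hml2 : 1 ≤ m (Sum.inl ℓ₂) := by have := htot ℓ₂; omega
    set u : (Fin r ⊕ Fin r) →₀ ℕ :=
      Finsupp.single (Sum.inr ℓ₁) 1 + Finsupp.single (Sum.inl ℓ₂) 1 with hu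
    set v : (Fin r ⊕ Fin r) →₀ ℕ :=
      Finsupp.single (Sum.inr ℓ₂) 1 + Finsupp.single (Sum.inl ℓ₁) 1 with hv
    have hule : u ≤ m := by
      rw [Finsupp.le_def]
      intro j
      rw [hu, Finsupp.add_apply]
      match j with
      | Sum.inl x =>
        by_cases hx : x = ℓ₂
        · subst hx; simp [Finsupp.single_apply]; omega
        · simp [Finsupp.single_apply, Ne.symm hx]
      | Sum.inr x =>
        by_cases hx : x = ℓ₁
        · subst hx; simp [Finsupp.single_apply]; omega
        · simp [Finsupp.single_apply, Ne.symm hx]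
    set b : (Fin r ⊕ Fin r) →₀ ℕ := m - u with hb
    have hbu : b + u = m := tsub_add_cancel_of_le hule
    set m₂ : (Fin r ⊕ Fin r) →₀ ℕ := b + v with hm₂
    have hmj : ∀ j, m j = b j + u j := by
      intro j
      rw [← hbu]
      simp [Finsupp.add_apply]
    have hm₂j : ∀ j, m₂ j = b j + v j := by
      intro j
      simp [hm₂, Finsupp.add_apply]
    have huval : ∀ x : Fin r, u (Sum.inr x) = if x = ℓ₁ then 1 else 0 := by
      intro x
      rw [hu, Finsupp.add_apply]
      by_cases hx : x = ℓ₁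
      · subst hx; simp [Finsupp.single_apply]
      · simp [Finsupp.single_apply, Ne.symm hx, hx]
    have hvval : ∀ x : Fin r, v (Sum.inr x) = if x = ℓ₂ then 1 else 0 := by
      intro x
      rw [hv, Finsupp.add_apply]
      by_cases hx : x = ℓ₂
      · subst hx; simp [Finsupp.single_apply]
      · simp [Finsupp.single_apply, Ne.symm hx, hx]
    have hEuv : Emap p r u = Emap p r v := by
      rw [hu, hv, Emap_add, Emap_add, Emap_single_inr, Emap_single_inr,
        Emap_single_inl, Emap_single_inl]
      abel
    have hEm₂ : Emap p r m₂ = Emap p r m' := by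
      rw [hm₂, Emap_add, ← hEuv, ← Emap_add, hbu, hE]
    have hval1 : m (Sum.inr ℓ₁) = b (Sum.inr ℓ₁) + 1 ∧ m₂ (Sum.inr ℓ₁) = b (Sum.inr ℓ₁) := by
      constructor
      · rw [hmj (Sum.inr ℓ₁), huval, if_pos rfl]
      · rw [hm₂j (Sum.inr ℓ₁), hvval, if_neg hne12, add_zero]
    have hval2 : m (Sum.inr ℓ₂) = b (Sum.inr ℓ₂) ∧ m₂ (Sum.inr ℓ₂) = b (Sum.inr ℓ₂) + 1 := by
      constructor
      · rw [hmj (Sum.inr ℓ₂), huval, if_neg (Ne.symm hne12), add_zero]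
      · rw [hm₂j (Sum.inr ℓ₂), hvval, if_pos rfl]
    have hval3 : ∀ x : Fin r, x ≠ ℓ₁ → x ≠ ℓ₂ → m (Sum.inr x) = m₂ (Sum.inr x) := by
      intro x hx1 hx2
      rw [hmj (Sum.inr x), hm₂j (Sum.inr x), huval, hvval, if_neg hx1, if_neg hx2]
    have hlt : (∑ ℓ, (m₂ (Sum.inr ℓ) - m' (Sum.inr ℓ) + (m' (Sum.inr ℓ) - m₂ (Sum.inr ℓ)))) < n := by
      rw [← hn]
      apply Finset.sum_lt_sum
      · intro ℓ _
        rcases eq_or_ne ℓ ℓ₁ with h1 | h1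
        · subst h1
          obtain ⟨e1, e2⟩ := hval1
          omega
        · rcases eq_or_ne ℓ ℓ₂ with h2 | h2
          · subst h2
            obtain ⟨e1, e2⟩ := hval2
            omega
          · rw [hval3 ℓ h1 h2]
      · refine ⟨ℓ₁, Finset.mem_univ _, ?_⟩
        obtain ⟨e1, e2⟩ := hval1
        omega
    have hgen : monomial u (1 : k) - monomial v 1 ∈ Jideal k r := by
      rcases lt_or_gt_of_ne hne12 with h12 | h21
      · have hg : (X (Sum.inl ℓ₁) * X (Sum.inr ℓ₂) - X (Sum.inl ℓ₂) * X (Sum.inr ℓ₁) :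
            MvPolynomial (Fin r ⊕ Fin r) k) ∈ Jideal k r :=
          Ideal.subset_span ⟨ℓ₁, ℓ₂, h12, rfl⟩
        have he : monomial u (1 : k) - monomial v 1 =
            -(X (Sum.inl ℓ₁) * X (Sum.inr ℓ₂) - X (Sum.inl ℓ₂) * X (Sum.inr ℓ₁)) := by
          rw [hu, hv, pairmon, pairmon]
          ring
        rw [he]
        exact neg_mem hg
      · have hg : (X (Sum.inl ℓ₂) * X (Sum.inr ℓ₁) - X (Sum.inl ℓ₁) * X (Sum.inr ℓ₂) :
            MvPolynomial (Fin r ⊕ Fin r) k) ∈ Jideal k r :=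
          Ideal.subset_span ⟨ℓ₂, ℓ₁, h21, rfl⟩
        have he : monomial u (1 : k) - monomial v 1 =
            X (Sum.inl ℓ₂) * X (Sum.inr ℓ₁) - X (Sum.inl ℓ₁) * X (Sum.inr ℓ₂) := by
          rw [hu, hv, pairmon, pairmon]
          ring
        rw [he]
        exact hg
    have hstep : monomial m (1 : k) - monomial m₂ 1 ∈ Jideal k r := by
      have he : monomial m (1 : k) - monomial m₂ 1
          = monomial b 1 * (monomial u 1 - monomial v 1) := by
        rw [mul_sub, monomial_mul, monomial_mul, one_mul, ← hbu, hm₂]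
      rw [he]
      exact Ideal.mul_mem_left _ _ hgen
    have hrest : monomial m₂ (1 : k) - monomial m' 1 ∈ Jideal k r :=
      ih _ hlt m₂ m' rfl hEm₂
    have := add_mem hstep hrest
    rwa [sub_add_sub_cancel] at this

lemma coeff_phiMap (p r : ℕ) (f : MvPolynomial (Fin r ⊕ Fin r) k) (d : Option (Fin r) →₀ ℕ) :
    coeff d (phiMap k p r f) =
      ∑ u ∈ f.support, if Emap p r u = d then coeff u f else 0 := by
  conv_lhs => rw [f.as_sum, map_sum]
  rw [coeff_sum]
  refine Finset.sum_congr rfl fun u _ => ?_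
  rw [phiMap_monomial, coeff_monomial]

/-- The kernel of the parametrizing monomial map is contained in `J_r`. -/
lemma ker_phiMap_le_J (p r : ℕ) (hp : 0 < p) (f : MvPolynomial (Fin r ⊕ Fin r) k)
    (hf : phiMap k p r f = 0) : f ∈ Jideal k r := by
  suffices H : ∀ n : ℕ, ∀ f : MvPolynomial (Fin r ⊕ Fin r) k, f.support.card ≤ n →
      phiMap k p r f = 0 → f ∈ Jideal k r from H _ f le_rfl hf
  intro n
  induction n with
  | zero =>
    intro f hcard _
    have : f = 0 := by
      rw [← support_eq_empty]
      exact Finset.card_eq_zero.mp (Nat.le_zero.mp hcard)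
    rw [this]
    exact zero_mem _
  | succ n IH =>
    intro f hcard hf0
    by_cases hfz : f = 0
    · rw [hfz]; exact zero_mem _
    · obtain ⟨m, hm⟩ := Finset.nonempty_iff_ne_empty.mpr
        (fun he => hfz (support_eq_empty.mp he))
      set c := coeff m f with hc
      have hcne : c ≠ 0 := mem_support_iff.mp hm
      by_cases hex : ∃ m' ∈ f.support, m' ≠ m ∧ Emap p r m' = Emap p r m
      · obtain ⟨m', hm's, hne, hEE⟩ := hex
        set g : MvPolynomial (Fin r ⊕ Fin r) k := f - monomial m c + monomial m' c with hg
        have hgf : phiMap k p r g = 0 := by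
          rw [hg, map_add, map_sub, hf0, phiMap_monomial, phiMap_monomial, hEE]
          ring
        have hsub : g.support ⊆ f.support.erase m := by
          intro u hu
          have hcu : coeff u g ≠ 0 := mem_support_iff.mp hu
          rw [hg, coeff_add, coeff_sub, coeff_monomial, coeff_monomial] at hcu
          rcases eq_or_ne u m with rfl | hum
          · exfalso
            apply hcu
            rw [if_pos rfl, if_neg hne]
            ring
          · refine Finset.mem_erase.mpr ⟨hum, mem_support_iff.mpr fun h0 => ?_⟩
            apply hcu
            rw [h0, if_neg (fun h : m = u => hum (h.symm)), if_neg]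
            · ring
            · intro h
              subst h
              exact (mem_support_iff.mp hm's) h0
        have hcardg : g.support.card ≤ n := by
          calc g.support.card ≤ (f.support.erase m).card := Finset.card_le_card hsub
          _ = f.support.card - 1 := Finset.card_erase_of_mem hm
          _ ≤ n := by omega
        have hgJ : g ∈ Jideal k r := IH g hcardg hgf
        have hdiff : monomial m c - monomial m' c ∈ Jideal k r := by
          have := Ideal.mul_mem_left _ (C c)
            (monomial_sub_mem_J p r hp _ m m' rfl hEE.symm)
          rwa [mul_sub, C_mul_monomial, C_mul_monomial, mul_one] at this
        have hge : g + (monomial m c - monomial m' c) = f := by rw [hg]; ring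
        rw [← hge]
        exact add_mem hgJ hdiff
      · exfalso
        push_neg at hex
        have h1 : coeff (Emap p r m) (phiMap k p r f) = c := by
          rw [coeff_phiMap]
          rw [Finset.sum_eq_single_of_mem m hm]
          · rw [if_pos rfl]
          · intro u hu hune
            rw [if_neg (hex u hu hune)]
        rw [hf0, coeff_zero] at h1
        exact hcne h1.symm

/-- The parametrization kills the relations defining `Q_r`. -/
lemma vfun_kills (p r : ℕ) : ∀ a ∈ Qrel k p r, aeval (vfun k p r) a = 0 := by
  have hle : Qrel k p r ≤
      RingHom.ker (aeval (vfun k p r) :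
        MvPolynomial (Fin r ⊕ Fin r) k →ₐ[k] MvPolynomial (Option (Fin r)) k) := by
    rw [Qrel, Ideal.span_le]
    rintro f ⟨ℓ, ℓ', hll, rfl⟩
    have hlv : (ℓ : ℕ) < (ℓ' : ℕ) := hll
    have hexp : (ℓ : ℕ) + ((ℓ' : ℕ) - (ℓ : ℕ)) = (ℓ' : ℕ) := by omega
    rw [SetLike.mem_coe, RingHom.mem_ker]
    simp only [map_sub, map_mul, map_pow, aeval_X, vfun]
    rw [mul_pow, ← pow_mul, ← pow_add, hexp]
    ring
  exact fun a ha => hle ha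


/-- A generic criterion: if `B` is generated over `k` by a set of elements each of which has
a power in the image of `L : A →ₐ[k] B`, and `B` is of finite type over `k`, then `L` is
finite. -/
lemma algHom_finite_aux {k A B : Type*} [CommRing k] [CommRing A] [CommRing B]
    [Algebra k A] [Algebra k B] (L : A →ₐ[k] B)
    (S : Set B) (hadj : Algebra.adjoin k S = ⊤)
    (hgen : ∀ s ∈ S, ∃ a : A, ∃ n : ℕ, n ≠ 0 ∧ s ^ n = L a)
    [Algebra.FiniteType k B] :
    L.toRingHom.Finite := by
  letI : Algebra A B := L.toRingHom.toAlgebra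
  haveI : IsScalarTower k A B := IsScalarTower.of_algebraMap_eq' (L.comp_algebraMap).symm
  haveI hftA : Algebra.FiniteType A B := Algebra.FiniteType.of_restrictScalars_finiteType k A B
  have hint : ∀ s ∈ S, IsIntegral A s := by
    rintro s hs
    obtain ⟨a, n, hn, hsa⟩ := hgen s hs
    refine ⟨Polynomial.X ^ n - Polynomial.C a, Polynomial.monic_X_pow_sub_C _ hn, ?_⟩
    rw [Polynomial.eval₂_sub, Polynomial.eval₂_X_pow, Polynomial.eval₂_C]
    have hmap : algebraMap A B a = L a := rfl
    rw [hmap, ← hsa, sub_self]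
  have hsub2 : Algebra.adjoin A S ≤ integralClosure A B := Algebra.adjoin_le hint
  have hIsInt : L.toRingHom.IsIntegral := by
    intro x
    have h1 : x ∈ Algebra.adjoin k S := by rw [hadj]; trivial
    have h2 : Algebra.adjoin k S ≤ Subalgebra.restrictScalars k (Algebra.adjoin A S) :=
      Algebra.adjoin_le fun s hs =>
        (Subalgebra.mem_restrictScalars k).mpr (Algebra.subset_adjoin hs)
    exact hsub2 (h2 h1)
  exact RingHom.IsIntegral.to_finite hIsInt hftA

end Aux

/-- The assignment `X_ℓ ↦ x_ℓ^{p^{r−ℓ−1}}`, `Y_ℓ ↦ y_ℓ^{p^{r−ℓ−1}}` kills every generator of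
`J_r`, hence induces a `k`-algebra homomorphism `θ̄_r : B_r/J_r → Q_r`; moreover `θ̄_r` is
injective and finite (i.e. `Q_r` is a finitely generated module over the image of `θ̄_r`). -/
theorem stmt_10 (k : Type*) [Field k] [IsAlgClosed k] (p : ℕ) (hp : p.Prime)
    (hp2 : 2 < p) [CharP k p] (r : ℕ) (hr : 1 ≤ r) :
    (∀ ℓ ℓ' : Fin r, ℓ < ℓ' →
      thetaAux k p r
        (X (Sum.inl ℓ) * X (Sum.inr ℓ') - X (Sum.inl ℓ') * X (Sum.inr ℓ)) = 0) ∧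
    ∀ h : ∀ a ∈ Jideal k r, thetaAux k p r a = 0,
      Function.Injective (Ideal.Quotient.liftₐ (Jideal k r) (thetaAux k p r) h) ∧
      (Ideal.Quotient.liftₐ (Jideal k r) (thetaAux k p r) h).toRingHom.Finite := by
  constructor
  · -- generators are killed
    intro ℓ ℓ' hll
    have hlv : (ℓ : ℕ) < (ℓ' : ℕ) := hll
    have hlr : (ℓ' : ℕ) < r := ℓ'.isLt
    have hmem : (X (Sum.inl ℓ) ^ p ^ ((ℓ' : ℕ) - (ℓ : ℕ)) * X (Sum.inr ℓ') -
        X (Sum.inr ℓ) ^ p ^ ((ℓ' : ℕ) - (ℓ : ℕ)) * X (Sum.inl ℓ') :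
        MvPolynomial (Fin r ⊕ Fin r) k) ∈ Qrel k p r :=
      Ideal.subset_span ⟨ℓ, ℓ', hll, rfl⟩
    have h0 : (Ideal.Quotient.mk (Qrel k p r) (X (Sum.inl ℓ))) ^ p ^ ((ℓ' : ℕ) - (ℓ : ℕ)) *
          Ideal.Quotient.mk (Qrel k p r) (X (Sum.inr ℓ')) =
        (Ideal.Quotient.mk (Qrel k p r) (X (Sum.inr ℓ))) ^ p ^ ((ℓ' : ℕ) - (ℓ : ℕ)) *
          Ideal.Quotient.mk (Qrel k p r) (X (Sum.inl ℓ')) := by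
      rw [← sub_eq_zero, ← map_pow, ← map_pow, ← map_mul, ← map_mul, ← map_sub]
      exact Ideal.Quotient.eq_zero_iff_mem.mpr hmem
    simp only [thetaAux, map_sub, map_mul, aeval_X, Sum.elim_inl, Sum.elim_inr]
    rw [sub_eq_zero]
    have hexp : r - (ℓ : ℕ) - 1 = ((ℓ' : ℕ) - (ℓ : ℕ)) + (r - (ℓ' : ℕ) - 1) := by omega
    rw [hexp, pow_add]
    rw [pow_mul, pow_mul, ← mul_pow, h0, mul_pow]
    ring
  · -- injectivity and finiteness
    intro h
    set R := MvPolynomial (Fin r ⊕ Fin r) k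
    set Aq := R ⧸ Jideal k r
    set Bq := R ⧸ Qrel k p r
    set L := Ideal.Quotient.liftₐ (Jideal k r) (thetaAux k p r) h with hL
    -- the parametrization of `Q_r`
    set psi : Bq →ₐ[k] MvPolynomial (Option (Fin r)) k :=
      Ideal.Quotient.liftₐ (Qrel k p r) (aeval (vfun k p r)) (vfun_kills p r) with hpsi
    have hpsimk : ∀ a : R, psi (Ideal.Quotient.mk (Qrel k p r) a) = aeval (vfun k p r) a := by
      intro a
      rw [hpsi, Ideal.Quotient.liftₐ_apply]
      rfl
    have hLmk : ∀ a : R, L (Ideal.Quotient.mk (Jideal k r) a) = thetaAux k p r a := by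
      intro a
      rw [hL, Ideal.Quotient.liftₐ_apply]
      rfl
    have hthetaX : ∀ i : Fin r ⊕ Fin r, thetaAux k p r (X i) =
        Ideal.Quotient.mk (Qrel k p r) (X i) ^ p ^ (r - Sum.elim Fin.val Fin.val i - 1) := by
      intro i
      rw [thetaAux, aeval_X]
    have hcomp : psi.comp (thetaAux k p r) = phiMap k p r := by
      apply MvPolynomial.algHom_ext
      intro i
      rw [AlgHom.comp_apply, hthetaX, map_pow, hpsimk, aeval_X]
      match i with
      | Sum.inl ℓ =>
        simp only [vfun, gfun, phiMap, aeval_X, Sum.elim_inl]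
      | Sum.inr ℓ =>
        have hexp2 : (ℓ : ℕ) + (r - (ℓ : ℕ) - 1) = r - 1 := by
          have := ℓ.isLt
          omega
        simp only [vfun, phiMap, aeval_X, Sum.elim_inr]
        rw [mul_pow, ← pow_mul, ← pow_add, hexp2]
        rfl
    have hinj : Function.Injective L := by
      rw [injective_iff_map_eq_zero]
      intro a ha
      obtain ⟨f, rfl⟩ := Ideal.Quotient.mk_surjective a
      rw [hLmk] at ha
      have h2 : phiMap k p r f = 0 := by
        rw [← hcomp, AlgHom.comp_apply, ha, map_zero]
      have h3 : f ∈ Jideal k r := ker_phiMap_le_J p r hp.pos f h2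
      exact Ideal.Quotient.eq_zero_iff_mem.mpr h3
    refine ⟨hinj, ?_⟩
    -- finiteness
    haveI hftk : Algebra.FiniteType k Bq :=
      Algebra.FiniteType.of_surjective (Ideal.Quotient.mkₐ k (Qrel k p r))
        (Ideal.Quotient.mkₐ_surjective k _)
    apply algHom_finite_aux L
      (Set.range fun i : Fin r ⊕ Fin r => Ideal.Quotient.mk (Qrel k p r) (X i))
    · -- adjoin = top
      have h1 : (Set.range fun i : Fin r ⊕ Fin r => Ideal.Quotient.mk (Qrel k p r) (X i)) =
          (Ideal.Quotient.mkₐ k (Qrel k p r)) '' (Set.range (X : (Fin r ⊕ Fin r) → R)) := by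
        rw [← Set.range_comp]
        rfl
      rw [h1, ← AlgHom.map_adjoin, MvPolynomial.adjoin_range_X, Algebra.map_top]
      exact (AlgHom.range_eq_top _).mpr (Ideal.Quotient.mkₐ_surjective k _)
    · -- generators have powers in the image
      rintro s ⟨i, rfl⟩
      refine ⟨Ideal.Quotient.mk (Jideal k r) (X i),
        p ^ (r - Sum.elim Fin.val Fin.val i - 1), pow_ne_zero _ hp.ne_zero, ?_⟩
      rw [hLmk, hthetaX]
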